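/- Soundness of the γ-decomposition for disjunctions of box formulae: for every CGM M, state s, coalition A, and state formulae p, q, M,s ⊨ ⟨⟨A⟩⟩((□p) ∨ (□q)) if and only if M,s ⊨ (p ∧ ⟨⟨A⟩⟩◯⟨⟨A⟩⟩□p) ∨ (q ∧ ⟨⟨A⟩⟩◯⟨⟨A⟩⟩□q) ∨ (p ∧ q ∧ ⟨⟨A⟩⟩◯⟨⟨A⟩⟩((□p) ∨ (□q))). -/
import Mathlib


/-- A concurrent game model. -/
structure CGM (Agent State : Type) where
  Act : Type
  avail : Agent → State → Set Act
  avail_ne : ∀ a s, (avail a s).Nonempty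
  out : State → (Agent → Act) → State

namespace CGM
variable {Agent State : Type} (M : CGM Agent State)

/-- A global move available at `s`. -/
def GlobalAvail (s : State) (σ : Agent → M.Act) : Prop := ∀ a, σ a ∈ M.avail a s

/-- A play: an infinite sequence of states following transitions. -/
def IsPlay (lam : ℕ → State) : Prop :=
  ∀ i, ∃ σ, M.GlobalAvail (lam i) σ ∧ M.out (lam i) σ = lam (i + 1)

/-- The history `λ₀ … λᵢ` of a play. -/
def hist (lam : ℕ → State) (i : ℕ) : List State := (List.range (i + 1)).map lam

/-- A perfect-recall strategy for coalition `A` prescribes available moves. -/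
def StratAvail (A : Set Agent) (F : List State → Agent → M.Act) : Prop :=
  ∀ (h : List State) (s : State), h.getLast? = some s → ∀ a ∈ A, F h a ∈ M.avail a s

/-- A play is compliant with the `A`-strategy `F`. -/
def Compliant (A : Set Agent) (F : List State → Agent → M.Act) (lam : ℕ → State) : Prop :=
  ∀ i, ∃ σ, M.GlobalAvail (lam i) σ ∧ (∀ a ∈ A, σ a = F (CGM.hist lam i) a) ∧
    M.out (lam i) σ = lam (i + 1)

/-- `M,s ⊨ ⟨⟨A⟩⟩Φ` : some perfect-recall `A`-strategy makes every compliant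
play from `s` satisfy the path property `Φ`. -/
def satCoal (A : Set Agent) (s : State) (Φ : (ℕ → State) → Prop) : Prop :=
  ∃ F, M.StratAvail A F ∧
    ∀ lam : ℕ → State, lam 0 = s → M.IsPlay lam → M.Compliant A F lam → Φ lam

end CGM

/-- ATL* formulae (state and path formulae together); `coal` is `⟨⟨A⟩⟩`,
`dcoal` is `[[A]]`, `untl` is the until operator. -/
inductive Form (Agent : Type) where
  | top : Form Agent
  | atom : ℕ → Form Agent
  | neg : Form Agent → Form Agent
  | and : Form Agent → Form Agent → Form Agent
  | or : Form Agent → Form Agent → Form Agent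
  | coal : Set Agent → Form Agent → Form Agent
  | dcoal : Set Agent → Form Agent → Form Agent
  | next : Form Agent → Form Agent
  | box : Form Agent → Form Agent
  | untl : Form Agent → Form Agent → Form Agent

namespace Form
variable {Agent State : Type}

mutual
/-- ATL⁺ state formulae. -/
def isState : Form Agent → Bool
  | .top => true
  | .atom _ => true
  | .neg φ => isState φ
  | .and φ ψ => isState φ && isState ψ
  | .or φ ψ => isState φ && isState ψ
  | .coal _ Φ => isPathPlus Φ
  | .dcoal _ Φ => isPathPlus Φ
  | _ => false

/-- ATL⁺ path formulae: boolean combinations of state formulae and of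
`◯φ`, `□φ`, `φ U ψ` with `φ, ψ` state formulae. -/
def isPathPlus : Form Agent → Bool
  | .top => true
  | .atom _ => true
  | .coal _A Φ => isPathPlus Φ
  | .dcoal _A Φ => isPathPlus Φ
  | .neg Φ => isPathPlus Φ
  | .and Φ Ψ => isPathPlus Φ && isPathPlus Ψ
  | .or Φ Ψ => isPathPlus Φ && isPathPlus Ψ
  | .next φ => isState φ
  | .box φ => isState φ
  | .untl φ ψ => isState φ && isState ψ
end

/-- Path satisfaction `M,λ ⊨ Φ` (state formulae are read at `λ 0`). -/
def psat (M : CGM Agent State) (V : ℕ → State → Prop) : Form Agent → (ℕ → State) → Prop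
  | .top, _ => True
  | .atom n, lam => V n (lam 0)
  | .neg φ, lam => ¬ psat M V φ lam
  | .and φ ψ, lam => psat M V φ lam ∧ psat M V ψ lam
  | .or φ ψ, lam => psat M V φ lam ∨ psat M V ψ lam
  | .coal A Φ, lam => M.satCoal A (lam 0) (fun lam' => psat M V Φ lam')
  | .dcoal A Φ, lam => M.satCoal Aᶜ (lam 0) (fun lam' => psat M V Φ lam')
  | .next φ, lam => psat M V φ (fun j => lam (j + 1))
  | .box φ, lam => ∀ i, psat M V φ (fun j => lam (i + j))
  | .untl φ ψ, lam => ∃ i, psat M V ψ (fun j => lam (i + j)) ∧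
      ∀ k < i, psat M V φ (fun j => lam (k + j))

/-- State satisfaction `M,s ⊨ φ` for state formulae. -/
def SSat (M : CGM Agent State) (V : ℕ → State → Prop) (φ : Form Agent) (s : State) : Prop :=
  psat M V φ (fun _ => s)

/-- Number of symbols of a formula. -/
def size : Form Agent → ℕ
  | .top => 1
  | .atom _ => 1
  | .neg φ => size φ + 1
  | .and φ ψ => size φ + size ψ + 1
  | .or φ ψ => size φ + size ψ + 1
  | .untl φ ψ => size φ + size ψ + 1
  | .coal _ Φ => size Φ + 1
  | .dcoal _ Φ => size Φ + 1
  | .next Φ => size Φ + 1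
  | .box Φ => size Φ + 1

def isTop : Form Agent → Bool
  | .top => true
  | _ => false

end Form

open Form

/-- The `⊗` operation on sets (lists) of pairs of formulae. -/
def otimes {Agent : Type} (l₁ l₂ : List (Form Agent × Form Agent)) :
    List (Form Agent × Form Agent) :=
  l₁.flatMap fun p => l₂.map fun q => (p.1.and q.1, p.2.and q.2)

/-- The `⊕` operation on sets (lists) of pairs of formulae. -/
def oplus {Agent : Type} (l₁ l₂ : List (Form Agent × Form Agent)) :
    List (Form Agent × Form Agent) :=
  (l₁.filter fun p => !p.2.isTop).flatMap fun p =>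
    (l₂.filter fun q => !q.2.isTop).map fun q => (p.1.and q.1, p.2.or q.2)

/-- The decomposition function `dec` on ATL⁺ path formulae. -/
def dec {Agent : Type} : Form Agent → List (Form Agent × Form Agent)
  | .next φ => [(.top, φ)]
  | .box φ => [(φ, .box φ)]
  | .untl φ ψ => [(φ, .untl φ ψ), (ψ, .top)]
  | .and Φ₁ Φ₂ => otimes (dec Φ₁) (dec Φ₂)
  | .or Φ₁ Φ₂ => dec Φ₁ ++ dec Φ₂ ++ oplus (dec Φ₁) (dec Φ₂)
  | φ => [(φ, .top)]

/-- The γ-component of a pair `(ψ,Ψ)` for `⟨⟨A⟩⟩`. -/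
def gcomp {Agent : Type} (A : Set Agent) (p : Form Agent × Form Agent) : Form Agent :=
  if p.2.isTop then p.1 else p.1.and (.coal A (.next (.coal A p.2)))

/-- The γ-component of a pair `(ψ,Ψ)` for `[[A]]`. -/
def gcompU {Agent : Type} (A : Set Agent) (p : Form Agent × Form Agent) : Form Agent :=
  if p.2.isTop then p.1 else p.1.and (.dcoal A (.next (.dcoal A p.2)))

/-- Conjunctive normal form: a list of clauses (lists of "literals"). -/
def cnf {Agent : Type} : Form Agent → List (List (Form Agent))
  | .and φ ψ => cnf φ ++ cnf ψ
  | .or φ ψ => (cnf φ).flatMap fun c => (cnf ψ).map fun d => c ++ d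
  | φ => [[φ]]

/-- Disjunction of a list of formulae. -/
def bigOr {Agent : Type} : List (Form Agent) → Form Agent
  | [] => .neg .top
  | a :: l => l.foldl .or a

/-- γ_d-components of `⟨⟨A⟩⟩Φ` : the conjuncts (clauses) of the CNF of the
disjunction of the γ-components. -/
def gammaD {Agent : Type} (A : Set Agent) (Φ : Form Agent) : List (Form Agent) :=
  (cnf (bigOr ((dec Φ).map (gcomp A)))).map bigOr

/-- γ_d-components of `[[A]]Φ`. -/
def gammaDU {Agent : Type} (A : Set Agent) (Φ : Form Agent) : List (Form Agent) :=
  (cnf (bigOr ((dec Φ).map (gcompU A)))).map bigOr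

/-- The component relation: successor, α, β and γ_d components. -/
inductive Component {Agent : Type} : Form Agent → Form Agent → Prop
  | andL (φ ψ : Form Agent) : Component (.and φ ψ) φ
  | andR (φ ψ : Form Agent) : Component (.and φ ψ) ψ
  | orL (φ ψ : Form Agent) : Component (.or φ ψ) φ
  | orR (φ ψ : Form Agent) : Component (.or φ ψ) ψ
  | succE (A : Set Agent) (φ : Form Agent) : Component (.coal A (.next φ)) φ
  | succU (A : Set Agent) (φ : Form Agent) : Component (.dcoal A (.next φ)) φ
  | gammaE (A : Set Agent) (Φ δ : Form Agent) :
      δ ∈ gammaD A Φ → Component (.coal A Φ) δ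
  | gammaU (A : Set Agent) (Φ δ : Form Agent) :
      δ ∈ gammaDU A Φ → Component (.dcoal A Φ) δ

/-- Membership in the closure `cl φ` : least set containing `⊤` and `φ`
closed under taking components. -/
inductive InCl {Agent : Type} (φ : Form Agent) : Form Agent → Prop
  | base : InCl φ φ
  | top : InCl φ .top
  | step {ψ χ : Form Agent} : InCl φ ψ → Component ψ χ → InCl φ χ


section Helpers
variable {Agent State : Type} {M : CGM Agent State}

lemma hist_zero (lam : ℕ → State) : CGM.hist lam 0 = [lam 0] := by
  simp [CGM.hist, List.range_succ]

lemma hist_succ (lam : ℕ → State) (i : ℕ) :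
    CGM.hist lam (i + 1) = CGM.hist lam i ++ [lam (i + 1)] := by
  simp [CGM.hist, List.range_succ]

lemma hist_getLast (lam : ℕ → State) (i : ℕ) :
    (CGM.hist lam i).getLast? = some (lam i) := by
  induction i with
  | zero => simp [hist_zero]
  | succ n ih => rw [hist_succ]; simp

lemma hist_cons_form (lam : ℕ → State) (i : ℕ) :
    CGM.hist lam (i + 1) = lam 0 :: CGM.hist (fun k => lam (k + 1)) i := by
  induction i with
  | zero => simp [CGM.hist, List.range_succ]
  | succ n ih =>
      rw [hist_succ, ih, hist_succ]
      rfl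

lemma getLast?_cons' {h : List State} {u : State} (s : State)
    (hh : h.getLast? = some u) : (s :: h).getLast? = some u := by
  cases h with
  | nil => simp at hh
  | cons a t => rw [List.getLast?_cons_cons]; exact hh

lemma hist_head (nu : ℕ → State) (i : ℕ) : ∃ r, CGM.hist nu i = nu 0 :: r := by
  cases i with
  | zero => exact ⟨[], hist_zero nu⟩
  | succ n => exact ⟨_, hist_cons_form nu n⟩


def consPlay (s : State) (nu : ℕ → State) : ℕ → State
  | 0 => s
  | n + 1 => nu n

lemma exists_compliant (A : Set Agent) (F : List State → Agent → M.Act)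
    (hF : M.StratAvail A F) (s : State) :
    ∃ lam, lam 0 = s ∧ M.IsPlay lam ∧ M.Compliant A F lam := by
  classical
  let mv : List State → State → Agent → M.Act := fun h t a =>
    if a ∈ A then F h a else (M.avail_ne a t).choose
  let step : List State × State → List State × State := fun pr =>
    (pr.1 ++ [M.out pr.2 (mv pr.1 pr.2)], M.out pr.2 (mv pr.1 pr.2))
  let pr : ℕ → List State × State := fun n => step^[n] ([s], s)
  let lam : ℕ → State := fun n => (pr n).2
  have hprS : ∀ n, pr (n + 1) = step (pr n) := fun n =>
    Function.iterate_succ_apply' step n _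
  have hfst : ∀ n, (pr n).1 = CGM.hist lam n := by
    intro n
    induction n with
    | zero => rw [hist_zero]; rfl
    | succ k ih =>
        rw [hprS k]
        show (pr k).1 ++ [(step (pr k)).2] = _
        rw [ih, hist_succ]
        congr 1
        show _ = [(pr (k+1)).2]
        rw [hprS k]
  have hga : ∀ n, M.GlobalAvail (lam n) (mv (CGM.hist lam n) (lam n)) := by
    intro n a
    by_cases ha : a ∈ A
    · simp only [mv, if_pos ha]
      exact hF _ _ (hist_getLast lam n) a ha
    · simp only [mv, if_neg ha]
      exact (M.avail_ne a (lam n)).choose_spec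
  have hout : ∀ n, M.out (lam n) (mv (CGM.hist lam n) (lam n)) = lam (n + 1) := by
    intro n
    rw [← hfst n]
    show (step (pr n)).2 = (pr (n+1)).2
    rw [hprS n]
  refine ⟨lam, rfl, fun i => ⟨_, hga i, hout i⟩, fun i => ⟨_, hga i, ?_, hout i⟩⟩
  intro a ha
  simp only [mv, if_pos ha]

lemma stratAvail_cons {A : Set Agent} {F : List State → Agent → M.Act}
    (hF : M.StratAvail A F) (s : State) :
    M.StratAvail A (fun h => F (s :: h)) := by
  intro h t hlast a ha
  exact hF (s :: h) t (getLast?_cons' s hlast) a ha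

lemma isPlay_cons {s : State} {σ₀ : Agent → M.Act} {nu : ℕ → State}
    (h1 : M.GlobalAvail s σ₀) (h3 : M.out s σ₀ = nu 0)
    (h5 : M.IsPlay nu) : M.IsPlay (consPlay s nu) := by
  intro i
  cases i with
  | zero => exact ⟨σ₀, h1, h3⟩
  | succ n => exact h5 n

lemma compliant_cons {A : Set Agent} {F : List State → Agent → M.Act}
    {s : State} {σ₀ : Agent → M.Act} {nu : ℕ → State}
    (h1 : M.GlobalAvail s σ₀)
    (h2 : ∀ a ∈ A, σ₀ a = F [s] a) (h3 : M.out s σ₀ = nu 0)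
    (h4 : M.Compliant A (fun h => F (s :: h)) nu) :
    M.Compliant A F (consPlay s nu) := by
  intro i
  cases i with
  | zero =>
      refine ⟨σ₀, h1, ?_, h3⟩
      rw [hist_zero]
      exact h2
  | succ n =>
      obtain ⟨σ, hg, hagree, houtn⟩ := h4 n
      refine ⟨σ, hg, ?_, houtn⟩
      intro a ha
      rw [hist_cons_form]
      exact hagree a ha

lemma compliant_zero {A : Set Agent} {F : List State → Agent → M.Act}
    {lam : ℕ → State} (h : M.Compliant A F lam) :
    ∃ σ, M.GlobalAvail (lam 0) σ ∧ (∀ a ∈ A, σ a = F [lam 0] a) ∧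
      M.out (lam 0) σ = lam 1 := by
  obtain ⟨σ, h1, h2, h3⟩ := h 0
  rw [hist_zero] at h2
  exact ⟨σ, h1, h2, h3⟩


lemma satCoal_mono {A : Set Agent} {s : State} {P1 P2 : (ℕ → State) → Prop}
    (h : ∀ lam, lam 0 = s → M.IsPlay lam → P1 lam → P2 lam)
    (hs : M.satCoal A s P1) : M.satCoal A s P2 := by
  obtain ⟨F, hF, hall⟩ := hs
  exact ⟨F, hF, fun lam h0 hp hc => h lam h0 hp (hall lam h0 hp hc)⟩

lemma unshift {A : Set Agent} {F : List State → Agent → M.Act} {s : State}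
    (hF : M.StratAvail A F) (P P' : (ℕ → State) → Prop)
    (hall : ∀ lam, lam 0 = s → M.IsPlay lam → M.Compliant A F lam → P lam)
    (hsuf : ∀ lam, lam 0 = s → P lam → P' (fun k => lam (k + 1))) :
    M.satCoal A s (fun lam => M.satCoal A (lam 1) P') := by
  refine ⟨F, hF, ?_⟩
  intro lam h0 _hplay hcomp
  obtain ⟨σ₀, hg0, hag0, hout0⟩ := compliant_zero hcomp
  rw [h0] at hg0 hag0 hout0
  refine ⟨fun h => F (s :: h), stratAvail_cons hF s, ?_⟩
  intro nu hnu0 hnuplay hnucomp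
  have h3 : M.out s σ₀ = nu 0 := by rw [hout0, hnu0]
  have hmu : P (consPlay s nu) :=
    hall _ rfl (isPlay_cons hg0 h3 hnuplay) (compliant_cons hg0 hag0 h3 hnucomp)
  have h4 := hsuf _ rfl hmu
  have h5 : (fun k => consPlay s nu (k + 1)) = nu := funext fun k => rfl
  rwa [h5] at h4

lemma paste {A : Set Agent} {F : List State → Agent → M.Act} {s : State}
    (hF : M.StratAvail A F) (P : (ℕ → State) → Prop)
    (H : ∀ lam, lam 0 = s → M.IsPlay lam → M.Compliant A F lam →
      M.satCoal A (lam 1) P) :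
    M.satCoal A s (fun lam => P (fun k => lam (k + 1))) := by
  classical
  let F₀ : List State → Agent → M.Act := fun h a =>
    (M.avail_ne a (h.getLast?.getD s)).choose
  have hF₀ : M.StratAvail A F₀ := by
    intro h t hlast a _
    simp only [F₀, hlast, Option.getD_some]
    exact (M.avail_ne a t).choose_spec
  let Gc : State → List State → Agent → M.Act := fun t =>
    if h : M.satCoal A t P then h.choose else F₀
  have hGc : ∀ t, M.StratAvail A (Gc t) := by
    intro t
    simp only [Gc]
    split
    · next h => exact h.choose_spec.1
    · exact hF₀
  have hGcGood : ∀ t (h : M.satCoal A t P), ∀ nu, nu 0 = t → M.IsPlay nu →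
      M.Compliant A (Gc t) nu → P nu := by
    intro t h nu h0 hpl hc
    have he : Gc t = h.choose := dif_pos h
    rw [he] at hc
    exact h.choose_spec.2 nu h0 hpl hc
  let Hstr : List State → Agent → M.Act := fun h =>
    match h with
    | [] => F []
    | [x] => F [x]
    | _ :: y :: r => Gc y (y :: r)
  have hHstr : M.StratAvail A Hstr := by
    intro h t hlast a ha
    match h with
    | [] => simp at hlast
    | [x] =>
        have hx : x = t := by simpa using hlast
        subst hx
        exact hF [x] x (by simp) a ha
    | x :: y :: r =>
        have hl : (y :: r).getLast? = some t := by
          rwa [List.getLast?_cons_cons] at hlast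
        exact hGc y (y :: r) t hl a ha
  refine ⟨Hstr, hHstr, ?_⟩
  intro lam h0 hplay hcomp
  obtain ⟨σ₀, hg0, hag0, hout0⟩ := compliant_zero hcomp
  rw [h0] at hg0 hag0 hout0
  obtain ⟨nu, hnu0, hnup, hnuc⟩ :=
    exists_compliant A (fun h => F (s :: h)) (stratAvail_cons hF s) (lam 1)
  have h3 : M.out s σ₀ = nu 0 := by rw [hout0, hnu0]
  have hmu := H (consPlay s nu) rfl (isPlay_cons hg0 h3 hnup)
    (compliant_cons hg0 hag0 h3 hnuc)
  have hgood : M.satCoal A (lam 1) P := by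
    rwa [show consPlay s nu 1 = lam 1 from hnu0] at hmu
  have hplay' : M.IsPlay (fun k => lam (k + 1)) := fun i => hplay (i + 1)
  have hcomp' : M.Compliant A (Gc (lam 1)) (fun k => lam (k + 1)) := by
    intro i
    obtain ⟨σ, hg, hagree, houti⟩ := hcomp (i + 1)
    refine ⟨σ, hg, ?_, houti⟩
    intro a ha
    have h6 := hagree a ha
    rw [hist_cons_form] at h6
    obtain ⟨r, hr⟩ := hist_head (fun k => lam (k + 1)) i
    rw [hr] at h6 ⊢
    exact h6
  exact hGcGood (lam 1) hgood _ rfl hplay' hcomp'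


lemma psat_state {V : ℕ → State → Prop} (φ : Form Agent) (hφ : φ.isState = true)
    (lam lam' : ℕ → State) (h0 : lam 0 = lam' 0) :
    Form.psat M V φ lam ↔ Form.psat M V φ lam' := by
  induction φ with
  | top => simp [Form.psat]
  | atom n => simp [Form.psat, h0]
  | neg φ ih =>
      rw [Form.isState] at hφ
      simp only [Form.psat]
      rw [ih hφ]
  | and φ ψ ih1 ih2 =>
      rw [Form.isState, Bool.and_eq_true] at hφ
      simp only [Form.psat]
      rw [ih1 hφ.1, ih2 hφ.2]
  | or φ ψ ih1 ih2 =>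
      rw [Form.isState, Bool.and_eq_true] at hφ
      simp only [Form.psat]
      rw [ih1 hφ.1, ih2 hφ.2]
  | coal B Φ ih => simp only [Form.psat, h0]
  | dcoal B Φ ih => simp only [Form.psat, h0]
  | next φ ih => simp [Form.isState] at hφ
  | box φ ih => simp [Form.isState] at hφ
  | untl φ ψ ih1 ih2 => simp [Form.isState] at hφ

lemma box_forall {V : ℕ → State → Prop} {φ : Form Agent}
    (hφ : φ.isState = true) (lam : ℕ → State) :
    (∀ i, Form.psat M V φ (fun j => lam (i + j))) ↔ ∀ i, Form.SSat M V φ (lam i) := by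
  refine forall_congr' fun i => psat_state φ hφ _ _ ?_
  simp

end Helpers
/-- soundness of the γ-decomposition for disjunctions of box formulae:
`⟨⟨A⟩⟩((□p) ∨ (□q)) ≡ (p ∧ ⟨⟨A⟩⟩◯⟨⟨A⟩⟩□p) ∨ (q ∧ ⟨⟨A⟩⟩◯⟨⟨A⟩⟩□q)
  ∨ (p ∧ q ∧ ⟨⟨A⟩⟩◯⟨⟨A⟩⟩((□p) ∨ (□q)))`. -/
theorem gamma_box_or_decomposition {Agent State : Type} (M : CGM Agent State)
    (V : ℕ → State → Prop) (A : Set Agent) (p q : Form Agent)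
    (hp : p.isState = true) (hq : q.isState = true) (s : State) :
    Form.SSat M V (.coal A (.or (.box p) (.box q))) s ↔
      Form.SSat M V
        (.or (.and p (.coal A (.next (.coal A (.box p)))))
          (.or (.and q (.coal A (.next (.coal A (.box q)))))
            (.and p (.and q
              (.coal A (.next (.coal A (.or (.box p) (.box q))))))))) s := by
  classical
  simp only [Form.SSat, Form.psat, zero_add]
  have bp := fun lam => box_forall (M := M) (V := V) hp lam
  have bq := fun lam => box_forall (M := M) (V := V) hq lam
  simp only [bp, bq]
  constructor
  · rintro ⟨F, hF, hall⟩
    obtain ⟨lam0, hl0, hpl0, hc0⟩ := exists_compliant A F hF s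
    by_cases hPs : Form.SSat M V p s
    · by_cases hQs : Form.SSat M V q s
      · refine Or.inr (Or.inr ⟨hPs, hQs, ?_⟩)
        refine unshift hF _ _ hall ?_
        rintro lam _h0 (h | h)
        · exact Or.inl fun i => h (i + 1)
        · exact Or.inr fun i => h (i + 1)
      · refine Or.inl ⟨hPs, ?_⟩
        refine unshift hF _ _ hall ?_
        rintro lam h0 (h | h)
        · exact fun i => h (i + 1)
        · exact absurd (h0 ▸ h 0) hQs
    · have hQs : Form.SSat M V q s := by
        rcases hall lam0 hl0 hpl0 hc0 with h | h
        · exact absurd (hl0 ▸ h 0) hPs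
        · exact hl0 ▸ h 0
      refine Or.inr (Or.inl ⟨hQs, ?_⟩)
      refine unshift hF _ _ hall ?_
      rintro lam h0 (h | h)
      · exact absurd (h0 ▸ h 0) hPs
      · exact fun i => h (i + 1)
  · rintro (⟨hPs, F, hF, hall⟩ | ⟨hQs, F, hF, hall⟩ | ⟨hPs, hQs, F, hF, hall⟩)
    · refine satCoal_mono ?_ (paste hF _ hall)
      intro lam h0 _ h
      refine Or.inl fun i => ?_
      cases i with
      | zero => exact h0 ▸ hPs
      | succ n => exact h n
    · refine satCoal_mono ?_ (paste hF _ hall)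
      intro lam h0 _ h
      refine Or.inr fun i => ?_
      cases i with
      | zero => exact h0 ▸ hQs
      | succ n => exact h n
    · refine satCoal_mono ?_ (paste hF _ hall)
      rintro lam h0 _ (h | h)
      · refine Or.inl fun i => ?_
        cases i with
        | zero => exact h0 ▸ hPs
        | succ n => exact h n
      · refine Or.inr fun i => ?_
        cases i with
        | zero => exact h0 ▸ hQs
        | succ n => exact h n
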